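/- Suppose σ ∈ S_n satisfies pmp_{\underline{1}32}(σ) = 1 and the unique starting position of a 132-occurrence is t. Then: (1) σ_{t+1} > σ_t; (2) the value σ_t + 1 occurs to the right of position t; and (3) σ_{t+1} ≠ σ_t + 1. -/
import Mathlib


/-- Number of positions that start an occurrence of 132 in `σ` (pmp of `\underline{1}32`). -/
noncomputable def pmpS132 {n : ℕ} (σ : Equiv.Perm (Fin n)) : ℕ :=
  Nat.card {i : Fin n // ∃ j k : Fin n, i < j ∧ j < k ∧ σ i < σ k ∧ σ k < σ j}

theorem stmt8 (n : ℕ) (σ : Equiv.Perm (Fin n)) (t : Fin n)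
    (h1 : pmpS132 σ = 1)
    (h2 : ∃ u v : Fin n, t < u ∧ u < v ∧ σ t < σ v ∧ σ v < σ u) :
    ∃ ht : (t : ℕ) + 1 < n,
      σ t < σ ⟨(t : ℕ) + 1, ht⟩ ∧
      (∃ r : Fin n, t < r ∧ (σ r : ℕ) = (σ t : ℕ) + 1) ∧
      (σ ⟨(t : ℕ) + 1, ht⟩ : ℕ) ≠ (σ t : ℕ) + 1 := by
  obtain ⟨u, v, htu, huv, h3, h4⟩ := h2
  have hsub : Subsingleton {i : Fin n // ∃ j k : Fin n, i < j ∧ j < k ∧ σ i < σ k ∧ σ k < σ j} :=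
    (Nat.card_eq_one_iff_unique.mp h1).1
  have key : ∀ i : Fin n, (∃ j k : Fin n, i < j ∧ j < k ∧ σ i < σ k ∧ σ k < σ j) → i = t := by
    intro i hi
    exact congrArg Subtype.val (hsub.elim ⟨i, hi⟩ ⟨t, u, v, htu, huv, h3, h4⟩)
  have ht : (t : ℕ) + 1 < n := lt_of_le_of_lt (Nat.succ_le_of_lt htu) u.isLt
  set t1 : Fin n := ⟨(t : ℕ) + 1, ht⟩ with ht1def
  have ht1 : t < t1 := by simp [Fin.lt_def, ht1def]
  have ht1u : t1 ≤ u := by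
    rw [Fin.le_def]
    exact Nat.succ_le_of_lt htu
  have hne_t : t1 ≠ t := ne_of_gt ht1
  refine ⟨ht, ?_, ?_, ?_⟩
  · -- σ t < σ t1
    by_contra hc
    have hlt : σ t1 < σ t :=
      lt_of_le_of_ne (not_lt.mp hc) (fun h => hne_t (σ.injective h))
    rcases lt_or_eq_of_le ht1u with hlt' | heq
    · have := key t1 ⟨u, v, hlt', huv, lt_trans hlt h3, h4⟩
      exact hne_t this
    · rw [heq] at hlt
      exact absurd (lt_trans (lt_trans h3 h4) hlt) (lt_irrefl _)
  · -- σ t + 1 occurs to the right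
    have hv : (σ t : ℕ) + 1 ≤ (σ v : ℕ) := h3
    have hm : (σ t : ℕ) + 1 < n := lt_of_le_of_lt hv (σ v).isLt
    set m : Fin n := ⟨(σ t : ℕ) + 1, hm⟩ with hmdef
    refine ⟨σ.symm m, ?_, by simp [hmdef]⟩
    have hrm : σ (σ.symm m) = m := σ.apply_symm_apply m
    have hrnet : σ.symm m ≠ t := by
      intro h
      have h2 : σ t = m := by rw [← h, hrm]
      have := congrArg Fin.val h2
      simp [hmdef] at this
    rcases lt_trichotomy t (σ.symm m) with h | h | h
    · exact h
    · exact absurd h.symm hrnet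
    · exfalso
      have hrv : σ.symm m ≠ v := ne_of_lt (lt_trans (lt_trans h htu) huv)
      have hσrv : σ (σ.symm m) < σ v := by
        have hne : σ (σ.symm m) ≠ σ v := fun hh => hrv (σ.injective hh)
        have : (σ (σ.symm m) : ℕ) ≤ (σ v : ℕ) := by rw [hrm]; exact hv
        exact lt_of_le_of_ne (Fin.le_def.mpr this) hne
      have := key (σ.symm m) ⟨u, v, lt_trans h htu, huv, hσrv, h4⟩
      exact hrnet this
  · -- σ t1 ≠ σ t + 1
    intro hc
    rcases lt_or_eq_of_le ht1u with hlt' | heq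
    · have ht1v : t1 ≠ v := ne_of_lt (lt_trans hlt' huv)
      have hσ : σ t1 < σ v := by
        have hne : σ t1 ≠ σ v := fun hh => ht1v (σ.injective hh)
        have : (σ t1 : ℕ) ≤ (σ v : ℕ) := by rw [hc]; exact h3
        exact lt_of_le_of_ne this hne
      exact hne_t (key t1 ⟨u, v, hlt', huv, hσ, h4⟩)
    · have : σ t1 = σ u := by rw [heq]
      have h3' : (σ t : ℕ) < (σ v : ℕ) := h3
      have h4' : (σ v : ℕ) < (σ u : ℕ) := h4
      have : (σ u : ℕ) = (σ t : ℕ) + 1 := by rw [← this, hc]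
      omega
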